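/- Higher-order barrier recursion preserves nonnegativity: let α₁, α₂ : R → R be locally Lipschitz extended class-K functions, and let ψ⁰ : [0, T) → R be C². Define ψ¹(t) = (ψ⁰)'(t) + α₁(ψ⁰(t)). If ψ⁰(0) ≥ 0, ψ¹(0) ≥ 0, and (ψ¹)'(t) ≥ -α₂(ψ¹(t)) for all t ∈ [0, T), then ψ⁰(t) ≥ 0 and ψ¹(t) ≥ 0 for all t ∈ [0, T). -/
import Mathlib

lemma key_nonneg (T : ℝ) (f : ℝ → ℝ) (hf : ContinuousOn f (Set.Ico 0 T))
    (h0 : 0 ≤ f 0)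
    (H : ∀ t ∈ Set.Ioo (0:ℝ) T, f t < 0 → ∃ f', 0 < f' ∧ HasDerivAt f f' t) :
    ∀ t ∈ Set.Ico 0 T, 0 ≤ f t := by
  intro t1 ht1
  by_contra hneg
  push_neg at hneg
  have h0t1 : 0 < t1 := by
    rcases lt_or_eq_of_le ht1.1 with h | h
    · exact h
    · exact absurd h0 (by rw [← h] at hneg; linarith)
  set S : Set ℝ := {t | t ∈ Set.Icc 0 t1 ∧ 0 ≤ f t} with hS
  have hsub : Set.Icc (0:ℝ) t1 ⊆ Set.Ico 0 T :=
    fun x hx => ⟨hx.1, lt_of_le_of_lt hx.2 ht1.2⟩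
  have hfc : ContinuousOn f (Set.Icc 0 t1) := hf.mono hsub
  have hclosed : IsClosed S :=
    hfc.preimage_isClosed_of_isClosed isClosed_Icc isClosed_Ici
  have hcomp : IsCompact S :=
    (isCompact_Icc (a := (0:ℝ)) (b := t1)).of_isClosed_subset hclosed (fun x hx => hx.1)
  have hne : S.Nonempty := ⟨0, ⟨le_refl 0, le_of_lt h0t1⟩, h0⟩
  obtain ⟨ht0S⟩ : ∃ _ : sSup S ∈ S, True := ⟨hcomp.sSup_mem hne, trivial⟩
  set t0 := sSup S
  have ht0le : t0 ≤ t1 := ht0S.1.2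
  have ht0ne : t0 ≠ t1 := fun h => by
    have := ht0S.2; rw [h] at this; linarith
  have ht0lt : t0 < t1 := lt_of_le_of_ne ht0le ht0ne
  have hnegOn : ∀ t ∈ Set.Ioc t0 t1, f t < 0 := by
    intro t ht
    by_contra hge
    push_neg at hge
    have : t ∈ S := ⟨⟨le_trans ht0S.1.1 (le_of_lt ht.1), ht.2⟩, hge⟩
    exact absurd (le_csSup hcomp.bddAbove this) (not_le.mpr ht.1)
  have hmono : StrictMonoOn f (Set.Icc t0 t1) := by
    apply strictMonoOn_of_deriv_pos (convex_Icc t0 t1)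
    · exact hfc.mono (Set.Icc_subset_Icc_left ht0S.1.1)
    · intro x hx
      rw [interior_Icc] at hx
      have hxIoo : x ∈ Set.Ioo (0:ℝ) T :=
        ⟨lt_of_le_of_lt ht0S.1.1 hx.1, lt_of_lt_of_le (lt_of_lt_of_le hx.2 le_rfl) (le_of_lt ht1.2)⟩
      obtain ⟨f', hf'pos, hder⟩ := H x hxIoo (hnegOn x ⟨hx.1, le_of_lt hx.2⟩)
      rw [hder.deriv]; exact hf'pos
  have := hmono (Set.left_mem_Icc.mpr ht0le) (Set.right_mem_Icc.mpr ht0le) ht0lt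
  linarith [ht0S.2]
/-- Higher-order barrier recursion preserves nonnegativity (second-order case):
with `ψ¹ = (ψ⁰)' + α₁(ψ⁰)`, if `ψ⁰(0) ≥ 0`, `ψ¹(0) ≥ 0`, and
`(ψ¹)' ≥ -α₂(ψ¹)` on `[0,T)`, then `ψ⁰ ≥ 0` and `ψ¹ ≥ 0` on `[0,T)`. -/
theorem stmt_3 (T : ℝ) (α₁ α₂ ψ0 ψ1 : ℝ → ℝ)
    (hα₁cont : Continuous α₁) (hα₁mono : StrictMono α₁) (hα₁0 : α₁ 0 = 0)
    (hα₁lip : LocallyLipschitz α₁)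
    (hα₂cont : Continuous α₂) (hα₂mono : StrictMono α₂) (hα₂0 : α₂ 0 = 0)
    (hα₂lip : LocallyLipschitz α₂)
    (hC2 : ContDiffOn ℝ 2 ψ0 (Set.Ico 0 T))
    (hψ1 : ∀ t ∈ Set.Ico (0 : ℝ) T,
      ψ1 t = derivWithin ψ0 (Set.Ico 0 T) t + α₁ (ψ0 t))
    (h00 : 0 ≤ ψ0 0) (h10 : 0 ≤ ψ1 0)
    (hderiv : ∀ t ∈ Set.Ico (0 : ℝ) T,
      -α₂ (ψ1 t) ≤ derivWithin ψ1 (Set.Ico 0 T) t) :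
    ∀ t ∈ Set.Ico (0 : ℝ) T, 0 ≤ ψ0 t ∧ 0 ≤ ψ1 t := by
  rcases le_or_gt T 0 with hT | hT
  · intro t ht; exact absurd (lt_of_le_of_lt ht.1 ht.2) (not_lt.mpr hT)
  have hud : UniqueDiffOn ℝ (Set.Ico (0:ℝ) T) := uniqueDiffOn_Ico 0 T
  have hcont0 : ContinuousOn ψ0 (Set.Ico 0 T) := hC2.continuousOn
  have hd0cont : ContinuousOn (derivWithin ψ0 (Set.Ico 0 T)) (Set.Ico 0 T) :=
    hC2.continuousOn_derivWithin hud (by norm_num)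
  have hψ1cont : ContinuousOn ψ1 (Set.Ico 0 T) := by
    apply ContinuousOn.congr (hd0cont.add (hα₁cont.comp_continuousOn hcont0))
    intro t ht; exact hψ1 t ht
  have hψ1nn : ∀ t ∈ Set.Ico (0:ℝ) T, 0 ≤ ψ1 t := by
    apply key_nonneg T ψ1 hψ1cont h10
    intro t htIoo hlt
    have htm : t ∈ Set.Ico (0:ℝ) T := ⟨le_of_lt htIoo.1, htIoo.2⟩
    have hα2 : α₂ (ψ1 t) < 0 := by
      have := hα₂mono hlt; rwa [hα₂0] at this
    have hdpos : 0 < derivWithin ψ1 (Set.Ico 0 T) t :=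
      lt_of_lt_of_le (by linarith) (hderiv t htm)
    have hdw : DifferentiableWithinAt ℝ ψ1 (Set.Ico 0 T) t := by
      by_contra hnd
      rw [derivWithin_zero_of_not_differentiableWithinAt hnd] at hdpos
      exact lt_irrefl 0 hdpos
    have hnh : Set.Ico (0:ℝ) T ∈ nhds t := Ico_mem_nhds htIoo.1 htIoo.2
    have hda : DifferentiableAt ℝ ψ1 t := hdw.differentiableAt hnh
    refine ⟨derivWithin ψ1 (Set.Ico 0 T) t, hdpos, ?_⟩
    have h := hda.hasDerivAt
    rwa [← derivWithin_of_mem_nhds hnh] at h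
  have hψ0nn : ∀ t ∈ Set.Ico (0:ℝ) T, 0 ≤ ψ0 t := by
    apply key_nonneg T ψ0 hcont0 h00
    intro t htIoo hlt
    have htm : t ∈ Set.Ico (0:ℝ) T := ⟨le_of_lt htIoo.1, htIoo.2⟩
    have hα1 : α₁ (ψ0 t) < 0 := by
      have := hα₁mono hlt; rwa [hα₁0] at this
    have heq : derivWithin ψ0 (Set.Ico 0 T) t = ψ1 t - α₁ (ψ0 t) := by
      have := hψ1 t htm; linarith
    have hdpos : 0 < derivWithin ψ0 (Set.Ico 0 T) t := by
      rw [heq]; have := hψ1nn t htm; linarith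
    have hnh : Set.Ico (0:ℝ) T ∈ nhds t := Ico_mem_nhds htIoo.1 htIoo.2
    have hda : DifferentiableAt ℝ ψ0 t :=
      ((hC2.differentiableOn (by norm_num)) t htm).differentiableAt hnh
    refine ⟨derivWithin ψ0 (Set.Ico 0 T) t, hdpos, ?_⟩
    have h := hda.hasDerivAt
    rwa [← derivWithin_of_mem_nhds hnh] at h
  intro t ht
  exact ⟨hψ0nn t ht, hψ1nn t ht⟩
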